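/- arXiv:1409.6263 — 4 statements merged into one kernel-verified Lean document; each statement's English description precedes it below -/
import Mathlib

section
/- Let S(ℓ, k) denote the set of double sequences of level ℓ and shape k = (k₁,…,kₙ). For any 1 ≤ t ≤ n, |S(ℓ, (k₁,…,kₙ))| = ∑_{h=0}^{ℓ} |S(ℓ, (k₁,…,k_t, h))| · |S(ℓ, (h, k_{t+1},…,kₙ))|. -/
/-- A double sequence of level `ℓ` and shape `k`. -/
def IsDoubleSeq {n : ℕ} (ℓ : ℤ) (k x y : Fin n → ℤ) : Prop :=
  (∀ j, 0 ≤ x j ∧ x j ≤ ℓ ∧ 0 ≤ y j ∧ y j ≤ ℓ) ∧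
  (∀ j, x j + y j = k j) ∧
  (∀ i, x i + ∑ j ∈ Finset.Iio i, (x j - y j) ≤ ℓ) ∧
  (∀ i, 0 ≤ -y i + ∑ j ∈ Finset.Iio i, (x j - y j)) ∧
  (∑ j, x j = ∑ j, y j)

/-- The number of double sequences of level `ℓ` and shape `k`. -/
noncomputable def DSCard {n : ℕ} (ℓ : ℤ) (k : Fin n → ℤ) : ℕ :=
  Nat.card {p : (Fin n → ℤ) × (Fin n → ℤ) // IsDoubleSeq ℓ k p.1 p.2}

namespace Stmt7Aux

open Finset

/-- extend a `Fin m`-indexed function by zero -/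
def ext {m : ℕ} (x : Fin m → ℤ) : ℕ → ℤ := fun j => if h : j < m then x ⟨j, h⟩ else 0

lemma ext_lt {m : ℕ} (x : Fin m → ℤ) {j : ℕ} (h : j < m) : ext x j = x ⟨j, h⟩ := dif_pos h

lemma sum_Iio {m : ℕ} (f : Fin m → ℤ) (i : Fin m) :
    ∑ j ∈ Finset.Iio i, f j = ∑ j ∈ Finset.range i.1, ext f j := by
  rw [← Nat.Iio_eq_range, ← Fin.map_valEmbedding_Iio, Finset.sum_map]
  exact Finset.sum_congr rfl fun j _ => (ext_lt f j.isLt).symm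

lemma sum_univ {m : ℕ} (f : Fin m → ℤ) : ∑ j, f j = ∑ j ∈ Finset.range m, ext f j := by
  rw [← Fin.sum_univ_eq_sum_range]
  exact Finset.sum_congr rfl fun j _ => (ext_lt f j.isLt).symm

/-- restatement with ℕ-indexed partial sums -/
lemma isDoubleSeq_iff {m : ℕ} (ℓ : ℤ) (k x y : Fin m → ℤ) :
    IsDoubleSeq ℓ k x y ↔
      (∀ j, 0 ≤ x j ∧ x j ≤ ℓ ∧ 0 ≤ y j ∧ y j ≤ ℓ) ∧
      (∀ j, x j + y j = k j) ∧
      (∀ i : Fin m, x i + ∑ j ∈ Finset.range i.1, (ext x j - ext y j) ≤ ℓ) ∧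
      (∀ i : Fin m, 0 ≤ -y i + ∑ j ∈ Finset.range i.1, (ext x j - ext y j)) ∧
      (∑ j ∈ Finset.range m, ext x j = ∑ j ∈ Finset.range m, ext y j) := by
  have key : ∀ i : Fin m, ∑ j ∈ Finset.Iio i, (x j - y j)
      = ∑ j ∈ Finset.range i.1, (ext x j - ext y j) := by
    intro i
    rw [sum_Iio (fun j => x j - y j) i]
    refine Finset.sum_congr rfl fun j hj => ?_
    simp only [Finset.mem_range] at hj
    have hjm : j < m := lt_of_lt_of_le hj (le_of_lt i.isLt)
    rw [ext_lt _ hjm, ext_lt x hjm, ext_lt y hjm]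
  unfold IsDoubleSeq
  rw [sum_univ x, sum_univ y]
  constructor
  · rintro ⟨h1, h2, h3, h4, h5⟩
    exact ⟨h1, h2, fun i => (key i) ▸ h3 i, fun i => (key i) ▸ h4 i, h5⟩
  · rintro ⟨h1, h2, h3, h4, h5⟩
    exact ⟨h1, h2, fun i => (key i).symm ▸ h3 i, fun i => (key i).symm ▸ h4 i, h5⟩


section Evals
variable {α : Sort*} {m : ℕ}

lemma snoc_eval (f : Fin m → α) (c : α) (i : Fin (m + 1)) (hi : i.1 < m) :
    @Fin.snoc m (fun _ => α) f c i = f ⟨i.1, hi⟩ := by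
  rw [Fin.snoc, dif_pos hi]
  rfl

lemma snoc_eval_last (f : Fin m → α) (c : α) (i : Fin (m + 1)) (hi : i.1 = m) :
    @Fin.snoc m (fun _ => α) f c i = c := by
  rw [Fin.snoc, dif_neg (by omega)]
  rfl

lemma cons_eval_zero (c : α) (f : Fin m → α) (i : Fin (m + 1)) (hi : i.1 = 0) :
    @Fin.cons m (fun _ => α) c f i = c := by
  have h : i = 0 := Fin.ext hi
  conv_lhs => rw [h]
  exact @Fin.cons_zero m (fun _ => α) c f

lemma cons_eval (c : α) (f : Fin m → α) (i : Fin (m + 1)) (hi : i.1 ≠ 0) :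
    @Fin.cons m (fun _ => α) c f i = f ⟨i.1 - 1, by omega⟩ := by
  have h : i = Fin.succ ⟨i.1 - 1, by omega⟩ := Fin.ext (by simp [Fin.val_succ]; omega)
  conv_lhs => rw [h]
  exact @Fin.cons_succ m (fun _ => α) c f _

end Evals

/-- first component shape -/
def kA (n t : ℕ) (ht2 : t ≤ n) (k : Fin n → ℤ) (c : ℤ) : Fin (t + 1) → ℤ :=
  Fin.snoc (fun j : Fin t => k (Fin.castLE ht2 j)) c

/-- second component shape -/
def kB (n t : ℕ) (ht2 : t ≤ n) (k : Fin n → ℤ) (c : ℤ) : Fin (n - t + 1) → ℤ :=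
  Fin.cons c (fun j : Fin (n - t) => k ⟨t + j.1, by have := j.2; omega⟩)

lemma A_boundary {n t : ℕ} (ht2 : t ≤ n) {ℓ c : ℤ} {k : Fin n → ℤ} {u v : Fin (t + 1) → ℤ}
    (h : IsDoubleSeq ℓ (kA n t ht2 k c) u v) :
    u (Fin.last t) = 0 ∧ v (Fin.last t) = c ∧
      ∑ j ∈ Finset.range t, (ext u j - ext v j) = c := by
  rw [isDoubleSeq_iff] at h
  obtain ⟨h1, h2, h3, h4, h5⟩ := h
  have hS : ∑ j ∈ Finset.range t, (ext u j - ext v j)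
      = ∑ j ∈ Finset.range t, ext u j - ∑ j ∈ Finset.range t, ext v j :=
    Finset.sum_sub_distrib _ _
  have hu : ∑ j ∈ Finset.range (t + 1), ext u j
      = ∑ j ∈ Finset.range t, ext u j + ext u t := Finset.sum_range_succ _ _
  have hv : ∑ j ∈ Finset.range (t + 1), ext v j
      = ∑ j ∈ Finset.range t, ext v j + ext v t := Finset.sum_range_succ _ _
  have heu : ext u t = u (Fin.last t) := ext_lt u (by omega)
  have hev : ext v t = v (Fin.last t) := ext_lt v (by omega)
  have h4' := h4 (Fin.last t)
  have hsh := h2 (Fin.last t)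
  rw [show (kA n t ht2 k c) (Fin.last t) = c from snoc_eval_last _ _ _ rfl] at hsh
  have hb := h1 (Fin.last t)
  simp only [Fin.val_last] at h4'
  constructor
  · omega
  constructor
  · omega
  · omega

lemma B_boundary {n t : ℕ} (ht2 : t ≤ n) {ℓ c : ℤ} {k : Fin n → ℤ}
    {w z : Fin (n - t + 1) → ℤ}
    (h : IsDoubleSeq ℓ (kB n t ht2 k c) w z) :
    w 0 = c ∧ z 0 = 0 := by
  rw [isDoubleSeq_iff] at h
  obtain ⟨h1, h2, h3, h4, h5⟩ := h
  have h4' := h4 0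
  simp only [Fin.val_zero, Finset.range_zero, Finset.sum_empty, add_zero] at h4'
  have hsh := h2 0
  rw [show (kB n t ht2 k c) 0 = c from cons_eval_zero _ _ _ rfl] at hsh
  have hb := h1 0
  omega

/-- forward maps -/
def fA1 (n t : ℕ) (ht2 : t ≤ n) (x : Fin n → ℤ) : Fin (t + 1) → ℤ :=
  fun i => if hi : i.1 < t then x ⟨i.1, by omega⟩ else 0

def fA2 (n t : ℕ) (ht2 : t ≤ n) (y : Fin n → ℤ) (c : ℤ) : Fin (t + 1) → ℤ :=
  fun i => if hi : i.1 < t then y ⟨i.1, by omega⟩ else c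

def fB1 (n t : ℕ) (ht1 : 1 ≤ t) (ht2 : t ≤ n) (x : Fin n → ℤ) (c : ℤ) : Fin (n - t + 1) → ℤ :=
  fun i => if hi : i.1 = 0 then c else x ⟨t + i.1 - 1, by omega⟩

def fB2 (n t : ℕ) (ht1 : 1 ≤ t) (ht2 : t ≤ n) (y : Fin n → ℤ) : Fin (n - t + 1) → ℤ :=
  fun i => if hi : i.1 = 0 then 0 else y ⟨t + i.1 - 1, by omega⟩

/-- backward glue map -/
def g (n t : ℕ) (ht2 : t ≤ n) (u : Fin (t + 1) → ℤ) (w : Fin (n - t + 1) → ℤ) : Fin n → ℤ :=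
  fun i => if hi : i.1 < t then u ⟨i.1, by omega⟩ else w ⟨i.1 - t + 1, by omega⟩


section ExtLemmas

variable {n t : ℕ}

lemma ext_fA1 (ht2 : t ≤ n) (x : Fin n → ℤ) {j : ℕ} (hj : j < t) :
    ext (fA1 n t ht2 x) j = ext x j := by
  simp [ext, fA1, hj, show j < t + 1 by omega, show j < n by omega]

lemma ext_fA1_t (ht2 : t ≤ n) (x : Fin n → ℤ) : ext (fA1 n t ht2 x) t = 0 := by
  simp [ext, fA1]

lemma ext_fA2 (ht2 : t ≤ n) (y : Fin n → ℤ) (c : ℤ) {j : ℕ} (hj : j < t) :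
    ext (fA2 n t ht2 y c) j = ext y j := by
  simp [ext, fA2, hj, show j < t + 1 by omega, show j < n by omega]

lemma ext_fA2_t (ht2 : t ≤ n) (y : Fin n → ℤ) (c : ℤ) : ext (fA2 n t ht2 y c) t = c := by
  simp [ext, fA2]

lemma ext_fB1_zero (ht1 : 1 ≤ t) (ht2 : t ≤ n) (x : Fin n → ℤ) (c : ℤ) :
    ext (fB1 n t ht1 ht2 x c) 0 = c := by
  simp [ext, fB1]

lemma ext_fB1 (ht1 : 1 ≤ t) (ht2 : t ≤ n) (x : Fin n → ℤ) (c : ℤ) {j : ℕ}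
    (hj1 : 1 ≤ j) (hj2 : j < n - t + 1) :
    ext (fB1 n t ht1 ht2 x c) j = ext x (t + j - 1) := by
  simp [ext, fB1, hj2, show ¬ j = 0 by omega, show t + j - 1 < n by omega]

lemma ext_fB2_zero (ht1 : 1 ≤ t) (ht2 : t ≤ n) (y : Fin n → ℤ) :
    ext (fB2 n t ht1 ht2 y) 0 = 0 := by
  simp [ext, fB2]

lemma ext_fB2 (ht1 : 1 ≤ t) (ht2 : t ≤ n) (y : Fin n → ℤ) {j : ℕ}
    (hj1 : 1 ≤ j) (hj2 : j < n - t + 1) :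
    ext (fB2 n t ht1 ht2 y) j = ext y (t + j - 1) := by
  simp [ext, fB2, hj2, show ¬ j = 0 by omega, show t + j - 1 < n by omega]

lemma ext_g_lt (ht2 : t ≤ n) (u : Fin (t + 1) → ℤ) (w : Fin (n - t + 1) → ℤ) {j : ℕ}
    (hj : j < t) : ext (g n t ht2 u w) j = ext u j := by
  simp [ext, g, hj, show j < n by omega, show j < t + 1 by omega]

lemma ext_g_ge (ht2 : t ≤ n) (u : Fin (t + 1) → ℤ) (w : Fin (n - t + 1) → ℤ) {j : ℕ}
    (hj1 : t ≤ j) (hj2 : j < n) : ext (g n t ht2 u w) j = ext w (j - t + 1) := by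
  simp [ext, g, hj2, show ¬ j < t by omega, show j - t + 1 < n - t + 1 by omega]

end ExtLemmas

/-- the cut height -/
def hval (t : ℕ) {n : ℕ} (x y : Fin n → ℤ) : ℤ :=
  ∑ j ∈ Finset.range t, (ext x j - ext y j)

section Structural

variable {n ℓ t : ℕ} {k x y : Fin n → ℤ}

lemma hval_bounds (ht2 : t ≤ n) (hP : IsDoubleSeq (ℓ : ℤ) k x y) :
    0 ≤ hval t x y ∧ hval t x y ≤ (ℓ : ℤ) := by
  rw [isDoubleSeq_iff] at hP
  obtain ⟨h1, h2, h3, h4, h5⟩ := hP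
  unfold hval
  rcases lt_or_eq_of_le ht2 with hlt | heq
  · have h3' := h3 ⟨t, hlt⟩
    have h4' := h4 ⟨t, hlt⟩
    have hb := h1 ⟨t, hlt⟩
    simp only [show ((⟨t, hlt⟩ : Fin n) : ℕ) = t from rfl] at h3' h4'
    constructor <;> omega
  · subst heq
    rw [Finset.sum_sub_distrib, h5]
    simp

lemma L1 (ht1 : 1 ≤ t) (ht2 : t ≤ n) (hP : IsDoubleSeq (ℓ : ℤ) k x y) :
    IsDoubleSeq (ℓ : ℤ) (kA n t ht2 k (hval t x y)) (fA1 n t ht2 x)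
      (fA2 n t ht2 y (hval t x y)) := by
  obtain ⟨hh0, hhl⟩ := hval_bounds ht2 hP
  rw [isDoubleSeq_iff] at hP ⊢
  obtain ⟨h1, h2, h3, h4, h5⟩ := hP
  have hsum_eq : ∀ r : ℕ, r ≤ t →
      ∑ j ∈ Finset.range r, (ext (fA1 n t ht2 x) j - ext (fA2 n t ht2 y (hval t x y)) j)
        = ∑ j ∈ Finset.range r, (ext x j - ext y j) := by
    intro r hr
    refine Finset.sum_congr rfl fun j hj => ?_
    simp only [Finset.mem_range] at hj
    rw [ext_fA1 ht2 x (by omega), ext_fA2 ht2 y _ (by omega)]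
  refine ⟨?_, ?_, ?_, ?_, ?_⟩
  · intro j
    by_cases hj : j.1 < t
    · have := h1 ⟨j.1, by omega⟩
      simp only [fA1, fA2]
      rw [dif_pos hj, dif_pos hj]
      exact this
    · simp only [fA1, fA2]
      rw [dif_neg hj, dif_neg hj]
      exact ⟨le_refl 0, Int.natCast_nonneg ℓ, hh0, hhl⟩
  · intro j
    by_cases hj : j.1 < t
    · simp only [fA1, fA2]
      rw [dif_pos hj, dif_pos hj]
      unfold kA
      rw [snoc_eval _ _ _ hj]
      exact h2 ⟨j.1, by omega⟩
    · simp only [fA1, fA2]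
      rw [dif_neg hj, dif_neg hj]
      unfold kA
      rw [snoc_eval_last _ _ _ (by omega)]
      ring
  · intro i
    rw [hsum_eq i.1 (by omega)]
    by_cases hi : i.1 < t
    · simp only [fA1]
      rw [dif_pos hi]
      exact h3 ⟨i.1, by omega⟩
    · simp only [fA1]
      rw [dif_neg hi]
      have hit : i.1 = t := by omega
      rw [hit]
      unfold hval at hhl
      omega
  · intro i
    rw [hsum_eq i.1 (by omega)]
    by_cases hi : i.1 < t
    · simp only [fA2]
      rw [dif_pos hi]
      exact h4 ⟨i.1, by omega⟩
    · simp only [fA2]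
      rw [dif_neg hi]
      have hit : i.1 = t := by omega
      rw [hit]
      unfold hval
      omega
  · rw [Finset.sum_range_succ, Finset.sum_range_succ, ext_fA1_t, ext_fA2_t,
      Finset.sum_congr rfl (fun j hj => ext_fA1 ht2 x (Finset.mem_range.1 hj)),
      Finset.sum_congr rfl (fun j hj => ext_fA2 ht2 y _ (Finset.mem_range.1 hj))]
    unfold hval
    rw [Finset.sum_sub_distrib]
    ring

lemma L2 (ht1 : 1 ≤ t) (ht2 : t ≤ n) (hP : IsDoubleSeq (ℓ : ℤ) k x y) :
    IsDoubleSeq (ℓ : ℤ) (kB n t ht2 k (hval t x y)) (fB1 n t ht1 ht2 x (hval t x y))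
      (fB2 n t ht1 ht2 y) := by
  obtain ⟨hh0, hhl⟩ := hval_bounds ht2 hP
  rw [isDoubleSeq_iff] at hP ⊢
  obtain ⟨h1, h2, h3, h4, h5⟩ := hP
  have key : ∀ m : ℕ, m ≤ n - t →
      ∑ j ∈ Finset.range (m + 1),
        (ext (fB1 n t ht1 ht2 x (hval t x y)) j - ext (fB2 n t ht1 ht2 y) j)
        = ∑ j ∈ Finset.range (t + m), (ext x j - ext y j) := by
    intro m hm
    rw [Finset.sum_range_succ']
    beta_reduce
    rw [ext_fB1_zero, ext_fB2_zero]
    rw [Finset.sum_range_add]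
    beta_reduce
    have e1 : ∑ j ∈ Finset.range m,
        (ext (fB1 n t ht1 ht2 x (hval t x y)) (j + 1) - ext (fB2 n t ht1 ht2 y) (j + 1))
        = ∑ j ∈ Finset.range m, (ext x (t + j) - ext y (t + j)) := by
      refine Finset.sum_congr rfl fun j hj => ?_
      simp only [Finset.mem_range] at hj
      rw [ext_fB1 ht1 ht2 x _ (by omega) (by omega), ext_fB2 ht1 ht2 y (by omega) (by omega),
        show t + (j + 1) - 1 = t + j by omega]
    rw [e1]
    unfold hval
    ring
  refine ⟨?_, ?_, ?_, ?_, ?_⟩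
  · intro j
    by_cases hj : j.1 = 0
    · simp only [fB1, fB2]
      rw [dif_pos hj, dif_pos hj]
      exact ⟨hh0, hhl, le_refl 0, Int.natCast_nonneg ℓ⟩
    · simp only [fB1, fB2]
      rw [dif_neg hj, dif_neg hj]
      exact h1 ⟨t + j.1 - 1, by omega⟩
  · intro j
    by_cases hj : j.1 = 0
    · simp only [fB1, fB2]
      rw [dif_pos hj, dif_pos hj]
      unfold kB
      rw [cons_eval_zero _ _ _ hj]
      ring
    · simp only [fB1, fB2]
      rw [dif_neg hj, dif_neg hj]
      unfold kB
      rw [cons_eval _ _ _ hj]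
      beta_reduce
      rw [h2 ⟨t + j.1 - 1, by omega⟩]
      congr 1
      exact Fin.ext (by simp; omega)
  · intro i
    by_cases hi : i.1 = 0
    · rw [hi]
      simp only [fB1]
      rw [dif_pos hi]
      simpa using hhl
    · have hkey := key (i.1 - 1) (by omega)
      rw [show i.1 - 1 + 1 = i.1 by omega] at hkey
      rw [hkey, show t + (i.1 - 1) = t + i.1 - 1 by omega]
      simp only [fB1]
      rw [dif_neg hi]
      exact h3 ⟨t + i.1 - 1, by omega⟩
  · intro i
    by_cases hi : i.1 = 0
    · rw [hi]
      simp only [fB2]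
      rw [dif_pos hi]
      simp
    · have hkey := key (i.1 - 1) (by omega)
      rw [show i.1 - 1 + 1 = i.1 by omega] at hkey
      rw [hkey, show t + (i.1 - 1) = t + i.1 - 1 by omega]
      simp only [fB2]
      rw [dif_neg hi]
      exact h4 ⟨t + i.1 - 1, by omega⟩
  · rw [Finset.sum_range_succ', Finset.sum_range_succ']
    beta_reduce
    rw [ext_fB1_zero, ext_fB2_zero]
    have e1 : ∑ j ∈ Finset.range (n - t), ext (fB1 n t ht1 ht2 x (hval t x y)) (j + 1)
        = ∑ j ∈ Finset.range (n - t), ext x (t + j) := by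
      refine Finset.sum_congr rfl fun j hj => ?_
      simp only [Finset.mem_range] at hj
      rw [ext_fB1 ht1 ht2 x _ (by omega) (by omega), show t + (j + 1) - 1 = t + j by omega]
    have e2 : ∑ j ∈ Finset.range (n - t), ext (fB2 n t ht1 ht2 y) (j + 1)
        = ∑ j ∈ Finset.range (n - t), ext y (t + j) := by
      refine Finset.sum_congr rfl fun j hj => ?_
      simp only [Finset.mem_range] at hj
      rw [ext_fB2 ht1 ht2 y (by omega) (by omega), show t + (j + 1) - 1 = t + j by omega]
    rw [e1, e2]
    have hx := Finset.sum_range_add (ext x) t (n - t)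
    have hy := Finset.sum_range_add (ext y) t (n - t)
    rw [show t + (n - t) = n by omega] at hx hy
    beta_reduce at hx hy
    have hcv : hval t x y = ∑ j ∈ Finset.range t, ext x j - ∑ j ∈ Finset.range t, ext y j := by
      unfold hval
      exact Finset.sum_sub_distrib _ _
    omega

lemma L3 (ht1 : 1 ≤ t) (ht2 : t ≤ n) {c : ℤ} {u v : Fin (t + 1) → ℤ}
    {w z : Fin (n - t + 1) → ℤ}
    (hA : IsDoubleSeq (ℓ : ℤ) (kA n t ht2 k c) u v)
    (hB : IsDoubleSeq (ℓ : ℤ) (kB n t ht2 k c) w z) :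
    IsDoubleSeq (ℓ : ℤ) k (g n t ht2 u w) (g n t ht2 v z) := by
  obtain ⟨hu0, hvc, hS⟩ := A_boundary ht2 hA
  obtain ⟨hwc, hz0⟩ := B_boundary ht2 hB
  have hu0' : u ⟨t, by omega⟩ = 0 := hu0
  have hvc' : v ⟨t, by omega⟩ = c := hvc
  have hwc' : w ⟨0, by omega⟩ = c := hwc
  have hz0' : z ⟨0, by omega⟩ = 0 := hz0
  rw [isDoubleSeq_iff] at hA hB ⊢
  obtain ⟨a1, a2, a3, a4, a5⟩ := hA
  obtain ⟨b1, b2, b3, b4, b5⟩ := hB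
  have keylt : ∀ r : ℕ, r ≤ t →
      ∑ j ∈ Finset.range r, (ext (g n t ht2 u w) j - ext (g n t ht2 v z) j)
        = ∑ j ∈ Finset.range r, (ext u j - ext v j) := by
    intro r hr
    refine Finset.sum_congr rfl fun j hj => ?_
    simp only [Finset.mem_range] at hj
    rw [ext_g_lt ht2 u w (by omega), ext_g_lt ht2 v z (by omega)]
  have keyge : ∀ m : ℕ, t + m ≤ n →
      ∑ j ∈ Finset.range (t + m), (ext (g n t ht2 u w) j - ext (g n t ht2 v z) j)
        = ∑ j ∈ Finset.range (m + 1), (ext w j - ext z j) := by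
    intro m hm
    rw [Finset.sum_range_add]
    beta_reduce
    rw [keylt t le_rfl, hS]
    rw [Finset.sum_range_succ']
    beta_reduce
    have ew0 : ext w 0 = c := by rw [ext_lt w (by omega)]; exact hwc'
    have ez0 : ext z 0 = 0 := by rw [ext_lt z (by omega)]; exact hz0'
    have e1 : ∑ j ∈ Finset.range m,
        (ext (g n t ht2 u w) (t + j) - ext (g n t ht2 v z) (t + j))
        = ∑ j ∈ Finset.range m, (ext w (j + 1) - ext z (j + 1)) := by
      refine Finset.sum_congr rfl fun j hj => ?_
      simp only [Finset.mem_range] at hj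
      rw [ext_g_ge ht2 u w (by omega) (by omega), ext_g_ge ht2 v z (by omega) (by omega),
        show t + j - t + 1 = j + 1 by omega]
    rw [e1, ew0, ez0]
    ring
  refine ⟨?_, ?_, ?_, ?_, ?_⟩
  · intro j
    by_cases hj : j.1 < t
    · simp only [g]
      rw [dif_pos hj, dif_pos hj]
      exact a1 ⟨j.1, by omega⟩
    · simp only [g]
      rw [dif_neg hj, dif_neg hj]
      exact b1 ⟨j.1 - t + 1, by omega⟩
  · intro j
    by_cases hj : j.1 < t
    · simp only [g]
      rw [dif_pos hj, dif_pos hj]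
      rw [a2 ⟨j.1, by omega⟩]
      unfold kA
      rw [snoc_eval _ _ _ hj]
      exact congrArg k (Fin.ext rfl)
    · simp only [g]
      rw [dif_neg hj, dif_neg hj]
      rw [b2 ⟨j.1 - t + 1, by omega⟩]
      unfold kB
      rw [cons_eval _ _ _ (Nat.succ_ne_zero _)]
      beta_reduce
      exact congrArg k (Fin.ext (by simp; omega))
  · intro i
    by_cases hi : i.1 < t
    · rw [keylt i.1 (by omega)]
      simp only [g]
      rw [dif_pos hi]
      exact a3 ⟨i.1, by omega⟩
    · have hkey := keyge (i.1 - t) (by omega)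
      rw [show t + (i.1 - t) = i.1 by omega] at hkey
      rw [hkey]
      simp only [g]
      rw [dif_neg hi]
      exact b3 ⟨i.1 - t + 1, by omega⟩
  · intro i
    by_cases hi : i.1 < t
    · rw [keylt i.1 (by omega)]
      simp only [g]
      rw [dif_pos hi]
      exact a4 ⟨i.1, by omega⟩
    · have hkey := keyge (i.1 - t) (by omega)
      rw [show t + (i.1 - t) = i.1 by omega] at hkey
      rw [hkey]
      simp only [g]
      rw [dif_neg hi]
      exact b4 ⟨i.1 - t + 1, by omega⟩
  · have hgx := Finset.sum_range_add (ext (g n t ht2 u w)) t (n - t)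
    have hgy := Finset.sum_range_add (ext (g n t ht2 v z)) t (n - t)
    rw [show t + (n - t) = n by omega] at hgx hgy
    beta_reduce at hgx hgy
    have e1 : ∑ j ∈ Finset.range t, ext (g n t ht2 u w) j = ∑ j ∈ Finset.range t, ext u j :=
      Finset.sum_congr rfl fun j hj => ext_g_lt ht2 u w (Finset.mem_range.1 hj)
    have e1' : ∑ j ∈ Finset.range t, ext (g n t ht2 v z) j = ∑ j ∈ Finset.range t, ext v j :=
      Finset.sum_congr rfl fun j hj => ext_g_lt ht2 v z (Finset.mem_range.1 hj)
    have e2 : ∑ j ∈ Finset.range (n - t), ext (g n t ht2 u w) (t + j)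
        = ∑ j ∈ Finset.range (n - t), ext w (j + 1) := by
      refine Finset.sum_congr rfl fun j hj => ?_
      simp only [Finset.mem_range] at hj
      rw [ext_g_ge ht2 u w (by omega) (by omega), show t + j - t + 1 = j + 1 by omega]
    have e2' : ∑ j ∈ Finset.range (n - t), ext (g n t ht2 v z) (t + j)
        = ∑ j ∈ Finset.range (n - t), ext z (j + 1) := by
      refine Finset.sum_congr rfl fun j hj => ?_
      simp only [Finset.mem_range] at hj
      rw [ext_g_ge ht2 v z (by omega) (by omega), show t + j - t + 1 = j + 1 by omega]
    rw [e1, e2] at hgx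
    rw [e1', e2'] at hgy
    have esu := Finset.sum_range_succ (ext u) t
    have esv := Finset.sum_range_succ (ext v) t
    have esw := Finset.sum_range_succ' (ext w) (n - t)
    have esz := Finset.sum_range_succ' (ext z) (n - t)
    have heu : ext u t = u ⟨t, by omega⟩ := ext_lt u (by omega)
    have hev : ext v t = v ⟨t, by omega⟩ := ext_lt v (by omega)
    have hew : ext w 0 = w ⟨0, by omega⟩ := ext_lt w (by omega)
    have hez : ext z 0 = z ⟨0, by omega⟩ := ext_lt z (by omega)
    rw [heu, hu0'] at esu
    rw [hev, hvc'] at esv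
    rw [hew, hwc'] at esw
    rw [hez, hz0'] at esz
    rw [esu, esv] at a5
    rw [esw, esz] at b5
    omega

lemma hval_g (ht2 : t ≤ n) {c : ℤ} {u v : Fin (t + 1) → ℤ} {w z : Fin (n - t + 1) → ℤ}
    (hA : IsDoubleSeq (ℓ : ℤ) (kA n t ht2 k c) u v) :
    hval t (g n t ht2 u w) (g n t ht2 v z) = c := by
  have h3 := (A_boundary ht2 hA).2.2
  unfold hval
  rw [← h3]
  refine Finset.sum_congr rfl fun j hj => ?_
  simp only [Finset.mem_range] at hj
  rw [ext_g_lt ht2 u w hj, ext_g_lt ht2 v z hj]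

end Structural


lemma L1c {n ℓ t : ℕ} {k x y : Fin n → ℤ} (ht1 : 1 ≤ t) (ht2 : t ≤ n)
    (hP : IsDoubleSeq (ℓ : ℤ) k x y) {c : ℤ} (hc : c = hval t x y) :
    IsDoubleSeq (ℓ : ℤ) (kA n t ht2 k c) (fA1 n t ht2 x) (fA2 n t ht2 y (hval t x y)) := by
  subst hc
  exact L1 ht1 ht2 hP

lemma L2c {n ℓ t : ℕ} {k x y : Fin n → ℤ} (ht1 : 1 ≤ t) (ht2 : t ≤ n)
    (hP : IsDoubleSeq (ℓ : ℤ) k x y) {c : ℤ} (hc : c = hval t x y) :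
    IsDoubleSeq (ℓ : ℤ) (kB n t ht2 k c) (fB1 n t ht1 ht2 x (hval t x y))
      (fB2 n t ht1 ht2 y) := by
  subst hc
  exact L2 ht1 ht2 hP

lemma finite_ds {m : ℕ} (ℓ : ℤ) (k : Fin m → ℤ) :
    Finite {p : (Fin m → ℤ) × (Fin m → ℤ) // IsDoubleSeq ℓ k p.1 p.2} := by
  haveI : Finite (Set.Icc (0 : ℤ) ℓ) := (Set.finite_Icc 0 ℓ).to_subtype
  refine Finite.of_injective (fun p =>
    ((fun j => (⟨p.1.1 j, (p.2.1 j).1, (p.2.1 j).2.1⟩ : Set.Icc (0 : ℤ) ℓ)),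
     (fun j => (⟨p.1.2 j, (p.2.1 j).2.2.1, (p.2.1 j).2.2.2⟩ : Set.Icc (0 : ℤ) ℓ)))) ?_
  intro p q hpq
  have h1 := congrArg Prod.fst hpq
  have h2 := congrArg Prod.snd hpq
  simp only [] at h1 h2
  exact Subtype.ext (Prod.ext
    (funext fun j => congrArg Subtype.val (congrFun h1 j))
    (funext fun j => congrArg Subtype.val (congrFun h2 j)))

lemma card_sigma_fin {N : ℕ} (f : Fin N → Type) [∀ i, Finite (f i)] :
    Nat.card (Σ i, f i) = ∑ i, Nat.card (f i) := by
  letI : ∀ i, Fintype (f i) := fun i => Fintype.ofFinite _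
  rw [Nat.card_eq_fintype_card, Fintype.card_sigma]
  exact Finset.sum_congr rfl fun i _ => (Nat.card_eq_fintype_card).symm

/-- the flat product type -/
abbrev QT (n t ℓ : ℕ) (ht2 : t ≤ n) (k : Fin n → ℤ) : Type :=
  {q : Fin (ℓ + 1) × (((Fin (t + 1) → ℤ) × (Fin (t + 1) → ℤ)) ×
      ((Fin (n - t + 1) → ℤ) × (Fin (n - t + 1) → ℤ))) //
    IsDoubleSeq (ℓ : ℤ) (kA n t ht2 k (q.1.1 : ℤ)) q.2.1.1 q.2.1.2 ∧
    IsDoubleSeq (ℓ : ℤ) (kB n t ht2 k (q.1.1 : ℤ)) q.2.2.1 q.2.2.2}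

def FwdS (n t ℓ : ℕ) (ht1 : 1 ≤ t) (ht2 : t ≤ n) (k : Fin n → ℤ)
    (p : {p : (Fin n → ℤ) × (Fin n → ℤ) // IsDoubleSeq (ℓ : ℤ) k p.1 p.2}) :
    QT n t ℓ ht2 k :=
  ⟨(⟨(hval t p.1.1 p.1.2).toNat, by have := hval_bounds ht2 p.2; omega⟩,
    ((fA1 n t ht2 p.1.1, fA2 n t ht2 p.1.2 (hval t p.1.1 p.1.2)),
     (fB1 n t ht1 ht2 p.1.1 (hval t p.1.1 p.1.2), fB2 n t ht1 ht2 p.1.2))),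
   by
    have hb := hval_bounds ht2 p.2
    exact ⟨L1c ht1 ht2 p.2 (Int.toNat_of_nonneg hb.1),
      L2c ht1 ht2 p.2 (Int.toNat_of_nonneg hb.1)⟩⟩

def BwdS (n t ℓ : ℕ) (ht1 : 1 ≤ t) (ht2 : t ≤ n) (k : Fin n → ℤ)
    (q : QT n t ℓ ht2 k) :
    {p : (Fin n → ℤ) × (Fin n → ℤ) // IsDoubleSeq (ℓ : ℤ) k p.1 p.2} :=
  ⟨(g n t ht2 q.1.2.1.1 q.1.2.2.1, g n t ht2 q.1.2.1.2 q.1.2.2.2),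
   L3 ht1 ht2 q.2.1 q.2.2⟩

lemma left_inv_s (n t ℓ : ℕ) (ht1 : 1 ≤ t) (ht2 : t ≤ n) (k : Fin n → ℤ)
    (p : {p : (Fin n → ℤ) × (Fin n → ℤ) // IsDoubleSeq (ℓ : ℤ) k p.1 p.2}) :
    BwdS n t ℓ ht1 ht2 k (FwdS n t ℓ ht1 ht2 k p) = p := by
  apply Subtype.ext
  simp only [FwdS, BwdS]
  refine Prod.ext ?_ ?_
  · funext i
    by_cases hi : i.1 < t
    · simp only [g]
      rw [dif_pos hi]
      simp only [fA1]
      rw [dif_pos hi]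
    · simp only [g]
      rw [dif_neg hi]
      simp only [fB1]
      rw [dif_neg (show ¬(i.1 - t + 1 = 0) by omega)]
      exact congrArg p.1.1 (Fin.ext (show t + (i.1 - t + 1) - 1 = i.1 by omega))
  · funext i
    by_cases hi : i.1 < t
    · simp only [g]
      rw [dif_pos hi]
      simp only [fA2]
      rw [dif_pos hi]
    · simp only [g]
      rw [dif_neg hi]
      simp only [fB2]
      rw [dif_neg (show ¬(i.1 - t + 1 = 0) by omega)]
      exact congrArg p.1.2 (Fin.ext (show t + (i.1 - t + 1) - 1 = i.1 by omega))

lemma right_inv_s (n t ℓ : ℕ) (ht1 : 1 ≤ t) (ht2 : t ≤ n) (k : Fin n → ℤ)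
    (q : QT n t ℓ ht2 k) :
    FwdS n t ℓ ht1 ht2 k (BwdS n t ℓ ht1 ht2 k q) = q := by
  obtain ⟨⟨h, ⟨⟨u, v⟩, ⟨w, z⟩⟩⟩, hA, hB⟩ := q
  have hc : hval t (g n t ht2 u w) (g n t ht2 v z) = ((h : ℕ) : ℤ) := hval_g ht2 hA
  obtain ⟨hu0, hvc, hS⟩ := A_boundary ht2 hA
  obtain ⟨hwc, hz0⟩ := B_boundary ht2 hB
  apply Subtype.ext
  simp only [FwdS, BwdS]
  refine Prod.ext ?_ (Prod.ext (Prod.ext ?_ ?_) (Prod.ext ?_ ?_))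
  · exact Fin.ext (show (hval t (g n t ht2 u w) (g n t ht2 v z)).toNat = h.1 by
      rw [hc]; exact Int.toNat_natCast _)
  · funext i
    by_cases hi : i.1 < t
    · simp only [fA1]
      rw [dif_pos hi]
      simp only [g]
      rw [dif_pos hi]
    · simp only [fA1]
      rw [dif_neg hi]
      rw [show i = Fin.last t from Fin.ext (by simp; omega)]
      exact hu0.symm
  · funext i
    by_cases hi : i.1 < t
    · simp only [fA2]
      rw [dif_pos hi]
      simp only [g]
      rw [dif_pos hi]
    · simp only [fA2]
      rw [dif_neg hi, hc]
      rw [show i = Fin.last t from Fin.ext (by simp; omega)]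
      exact hvc.symm
  · funext i
    by_cases hi : i.1 = 0
    · simp only [fB1]
      rw [dif_pos hi, hc]
      rw [show i = 0 from Fin.ext (by simp [hi])]
      exact hwc.symm
    · simp only [fB1]
      rw [dif_neg hi]
      simp only [g]
      rw [dif_neg (show ¬(t + i.1 - 1 < t) by omega)]
      exact congrArg w (Fin.ext (show t + i.1 - 1 - t + 1 = i.1 by omega))
  · funext i
    by_cases hi : i.1 = 0
    · simp only [fB2]
      rw [dif_pos hi]
      rw [show i = 0 from Fin.ext (by simp [hi])]
      exact hz0.symm
    · simp only [fB2]
      rw [dif_neg hi]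
      simp only [g]
      rw [dif_neg (show ¬(t + i.1 - 1 < t) by omega)]
      exact congrArg z (Fin.ext (show t + i.1 - 1 - t + 1 = i.1 by omega))

end Stmt7Aux


open Stmt7Aux

/-- the factorization rule for counting double sequences:
`|S(ℓ,(k₁,…,kₙ))| = ∑_{h=0}^{ℓ} |S(ℓ,(k₁,…,k_t,h))| ⬝ |S(ℓ,(h,k_{t+1},…,kₙ))|`. -/
theorem stmt7 (n ℓ t : ℕ) (ht1 : 1 ≤ t) (ht2 : t ≤ n) (k : Fin n → ℤ) :
    DSCard (ℓ : ℤ) k =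
      ∑ h ∈ Finset.range (ℓ + 1),
        DSCard (ℓ : ℤ) (Fin.snoc (fun j : Fin t => k (Fin.castLE ht2 j)) (h : ℤ)) *
        DSCard (ℓ : ℤ)
          (Fin.cons (h : ℤ) (fun j : Fin (n - t) => k ⟨t + j.1, by omega⟩)) := by
  classical
  haveI hFinA : ∀ hh : Fin (ℓ + 1),
      Finite {a : (Fin (t + 1) → ℤ) × (Fin (t + 1) → ℤ) //
        IsDoubleSeq (ℓ : ℤ) (kA n t ht2 k (hh.1 : ℤ)) a.1 a.2} := fun hh => finite_ds _ _
  haveI hFinB : ∀ hh : Fin (ℓ + 1),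
      Finite {b : (Fin (n - t + 1) → ℤ) × (Fin (n - t + 1) → ℤ) //
        IsDoubleSeq (ℓ : ℤ) (kB n t ht2 k (hh.1 : ℤ)) b.1 b.2} := fun hh => finite_ds _ _
  haveI hFinD : ∀ hh : Fin (ℓ + 1),
      Finite {d : ((Fin (t + 1) → ℤ) × (Fin (t + 1) → ℤ)) ×
          ((Fin (n - t + 1) → ℤ) × (Fin (n - t + 1) → ℤ)) //
        IsDoubleSeq (ℓ : ℤ) (kA n t ht2 k (hh.1 : ℤ)) d.1.1 d.1.2 ∧
        IsDoubleSeq (ℓ : ℤ) (kB n t ht2 k (hh.1 : ℤ)) d.2.1 d.2.2} := fun hh =>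
    Finite.of_equiv _ (Equiv.subtypeProdEquivProd
      (p := fun a : (Fin (t + 1) → ℤ) × (Fin (t + 1) → ℤ) => IsDoubleSeq (ℓ : ℤ) (kA n t ht2 k (hh.1 : ℤ)) a.1 a.2)
      (q := fun b : (Fin (n - t + 1) → ℤ) × (Fin (n - t + 1) → ℤ) => IsDoubleSeq (ℓ : ℤ) (kB n t ht2 k (hh.1 : ℤ)) b.1 b.2)).symm
  have E : {p : (Fin n → ℤ) × (Fin n → ℤ) // IsDoubleSeq (ℓ : ℤ) k p.1 p.2} ≃
      QT n t ℓ ht2 k :=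
    ⟨FwdS n t ℓ ht1 ht2 k, BwdS n t ℓ ht1 ht2 k, left_inv_s n t ℓ ht1 ht2 k,
      right_inv_s n t ℓ ht1 ht2 k⟩
  calc DSCard (ℓ : ℤ) k
      = Nat.card (QT n t ℓ ht2 k) := Nat.card_congr E
    _ = Nat.card (Σ hh : Fin (ℓ + 1),
          {d : ((Fin (t + 1) → ℤ) × (Fin (t + 1) → ℤ)) ×
              ((Fin (n - t + 1) → ℤ) × (Fin (n - t + 1) → ℤ)) //
            IsDoubleSeq (ℓ : ℤ) (kA n t ht2 k (hh.1 : ℤ)) d.1.1 d.1.2 ∧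
            IsDoubleSeq (ℓ : ℤ) (kB n t ht2 k (hh.1 : ℤ)) d.2.1 d.2.2}) :=
        Nat.card_congr (Equiv.subtypeProdEquivSigmaSubtype
          (fun (hh : Fin (ℓ + 1))
               (d : ((Fin (t + 1) → ℤ) × (Fin (t + 1) → ℤ)) ×
                 ((Fin (n - t + 1) → ℤ) × (Fin (n - t + 1) → ℤ))) =>
            IsDoubleSeq (ℓ : ℤ) (kA n t ht2 k (hh.1 : ℤ)) d.1.1 d.1.2 ∧
            IsDoubleSeq (ℓ : ℤ) (kB n t ht2 k (hh.1 : ℤ)) d.2.1 d.2.2))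
    _ = ∑ hh : Fin (ℓ + 1), Nat.card
          {d : ((Fin (t + 1) → ℤ) × (Fin (t + 1) → ℤ)) ×
              ((Fin (n - t + 1) → ℤ) × (Fin (n - t + 1) → ℤ)) //
            IsDoubleSeq (ℓ : ℤ) (kA n t ht2 k (hh.1 : ℤ)) d.1.1 d.1.2 ∧
            IsDoubleSeq (ℓ : ℤ) (kB n t ht2 k (hh.1 : ℤ)) d.2.1 d.2.2} :=
        card_sigma_fin _
    _ = ∑ hh : Fin (ℓ + 1), Nat.card
          ({a : (Fin (t + 1) → ℤ) × (Fin (t + 1) → ℤ) //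
              IsDoubleSeq (ℓ : ℤ) (kA n t ht2 k (hh.1 : ℤ)) a.1 a.2} ×
           {b : (Fin (n - t + 1) → ℤ) × (Fin (n - t + 1) → ℤ) //
              IsDoubleSeq (ℓ : ℤ) (kB n t ht2 k (hh.1 : ℤ)) b.1 b.2}) :=
        Finset.sum_congr rfl fun hh _ => Nat.card_congr (Equiv.subtypeProdEquivProd
          (p := fun a : (Fin (t + 1) → ℤ) × (Fin (t + 1) → ℤ) => IsDoubleSeq (ℓ : ℤ)
            (kA n t ht2 k (hh.1 : ℤ)) a.1 a.2)
          (q := fun b : (Fin (n - t + 1) → ℤ) × (Fin (n - t + 1) → ℤ) => IsDoubleSeq (ℓ : ℤ)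
            (kB n t ht2 k (hh.1 : ℤ)) b.1 b.2))
    _ = ∑ hh : Fin (ℓ + 1),
          Nat.card {a : (Fin (t + 1) → ℤ) × (Fin (t + 1) → ℤ) //
              IsDoubleSeq (ℓ : ℤ) (kA n t ht2 k (hh.1 : ℤ)) a.1 a.2} *
          Nat.card {b : (Fin (n - t + 1) → ℤ) × (Fin (n - t + 1) → ℤ) //
              IsDoubleSeq (ℓ : ℤ) (kB n t ht2 k (hh.1 : ℤ)) b.1 b.2} :=
        Finset.sum_congr rfl fun hh _ => Nat.card_prod _ _
    _ = ∑ h ∈ Finset.range (ℓ + 1),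
        DSCard (ℓ : ℤ) (Fin.snoc (fun j : Fin t => k (Fin.castLE ht2 j)) (h : ℤ)) *
        DSCard (ℓ : ℤ)
          (Fin.cons (h : ℤ) (fun j : Fin (n - t) => k ⟨t + j.1, by omega⟩)) := by
        rw [← Fin.sum_univ_eq_sum_range (fun m : ℕ =>
          DSCard (ℓ : ℤ) (Fin.snoc (fun j : Fin t => k (Fin.castLE ht2 j)) (m : ℤ)) *
          DSCard (ℓ : ℤ)
            (Fin.cons (m : ℤ) (fun j : Fin (n - t) => k ⟨t + j.1, by omega⟩))) (ℓ + 1)]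
        exact Finset.sum_congr rfl fun hh _ => rfl
end

section
/- For weights 0 ≤ k₁, k₂, k₃ ≤ ℓ, the number of double sequences of level ℓ and shape (k₁,k₂,k₃) equals 1 if k₁+k₂+k₃ is even, k₁+k₂+k₃ ≤ 2ℓ, and each kⱼ ≤ (k₁+k₂+k₃)/2; otherwise it equals 0. -/
lemma forall_fin3 (P : Fin 3 → Prop) : (∀ i, P i) ↔ P 0 ∧ P 1 ∧ P 2 := by
  constructor
  · intro h; exact ⟨h 0, h 1, h 2⟩
  · rintro ⟨h0, h1, h2⟩ i
    fin_cases i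
    · exact h0
    · exact h1
    · exact h2

lemma ds_iff (ℓ k₁ k₂ k₃ : ℤ) (x y : Fin 3 → ℤ) :
    IsDoubleSeq ℓ ![k₁, k₂, k₃] x y ↔
      (0 ≤ x 0 ∧ x 0 ≤ ℓ ∧ 0 ≤ y 0 ∧ y 0 ≤ ℓ) ∧
      (0 ≤ x 1 ∧ x 1 ≤ ℓ ∧ 0 ≤ y 1 ∧ y 1 ≤ ℓ) ∧
      (0 ≤ x 2 ∧ x 2 ≤ ℓ ∧ 0 ≤ y 2 ∧ y 2 ≤ ℓ) ∧
      x 0 + y 0 = k₁ ∧ x 1 + y 1 = k₂ ∧ x 2 + y 2 = k₃ ∧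
      x 0 ≤ ℓ ∧ x 1 + (x 0 - y 0) ≤ ℓ ∧ x 2 + ((x 0 - y 0) + (x 1 - y 1)) ≤ ℓ ∧
      0 ≤ -y 0 ∧ 0 ≤ -y 1 + (x 0 - y 0) ∧ 0 ≤ -y 2 + ((x 0 - y 0) + (x 1 - y 1)) ∧
      x 0 + x 1 + x 2 = y 0 + y 1 + y 2 := by
  have I0 : Finset.Iio (0 : Fin 3) = ∅ := by decide
  have I1 : Finset.Iio (1 : Fin 3) = {0} := by decide
  have I2 : Finset.Iio (2 : Fin 3) = ({0, 1} : Finset (Fin 3)) := by decide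
  have hpair : ∀ f : Fin 3 → ℤ, ∑ j ∈ ({0, 1} : Finset (Fin 3)), f j = f 0 + f 1 := by
    intro f; rw [Finset.sum_pair (by decide)]
  unfold IsDoubleSeq
  rw [forall_fin3, forall_fin3, forall_fin3, forall_fin3, Fin.sum_univ_three,
    Fin.sum_univ_three, I0, I1, I2, Finset.sum_empty, Finset.sum_singleton, hpair]
  simp only [Matrix.cons_val_zero, Matrix.cons_val_one, Matrix.head_cons,
    Matrix.cons_val_two, Matrix.tail_cons]
  constructor
  · rintro ⟨hb, hk, hu, hl, hs⟩; exact ⟨hb.1, hb.2.1, hb.2.2, hk.1, hk.2.1, hk.2.2,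
      by omega, by omega, by omega, by omega, by omega, by omega, hs⟩
  · rintro ⟨hb0, hb1, hb2, hk0, hk1, hk2, hu0, hu1, hu2, hl0, hl1, hl2, hs⟩
    exact ⟨⟨hb0, hb1, hb2⟩, ⟨hk0, hk1, hk2⟩, ⟨by omega, by omega, by omega⟩,
      ⟨by omega, by omega, by omega⟩, hs⟩

lemma ds_unique (ℓ k₁ k₂ k₃ : ℤ) (x y x' y' : Fin 3 → ℤ)
    (h : IsDoubleSeq ℓ ![k₁, k₂, k₃] x y) (h' : IsDoubleSeq ℓ ![k₁, k₂, k₃] x' y') :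
    x = x' ∧ y = y' := by
  rw [ds_iff] at h h'
  have ex0 : x 0 = x' 0 := by omega
  have ex1 : x 1 = x' 1 := by omega
  have ex2 : x 2 = x' 2 := by omega
  have ey0 : y 0 = y' 0 := by omega
  have ey1 : y 1 = y' 1 := by omega
  have ey2 : y 2 = y' 2 := by omega
  constructor <;> funext j <;> fin_cases j
  · exact ex0
  · exact ex1
  · exact ex2
  · exact ey0
  · exact ey1
  · exact ey2

lemma ds_nec (ℓ k₁ k₂ k₃ : ℤ) (x y : Fin 3 → ℤ)
    (h : IsDoubleSeq ℓ ![k₁, k₂, k₃] x y) :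
    Even (k₁ + k₂ + k₃) ∧ k₁ + k₂ + k₃ ≤ 2 * ℓ ∧
      2 * k₁ ≤ k₁ + k₂ + k₃ ∧ 2 * k₂ ≤ k₁ + k₂ + k₃ ∧ 2 * k₃ ≤ k₁ + k₂ + k₃ := by
  rw [ds_iff] at h
  exact ⟨⟨x 1 + k₁, by omega⟩, by omega, by omega, by omega, by omega⟩

/-- fusion rule for three points. For `0 ≤ k₁,k₂,k₃ ≤ ℓ`, the number
of double sequences of level `ℓ` and shape `(k₁,k₂,k₃)` is `1` exactly when
`k₁+k₂+k₃` is even, `k₁+k₂+k₃ ≤ 2ℓ`, and each `kⱼ ≤ (k₁+k₂+k₃)/2`; else `0`. -/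
theorem stmt10 (ℓ k₁ k₂ k₃ : ℤ)
    (h01 : 0 ≤ k₁) (h11 : k₁ ≤ ℓ) (h02 : 0 ≤ k₂) (h12 : k₂ ≤ ℓ)
    (h03 : 0 ≤ k₃) (h13 : k₃ ≤ ℓ) :
    DSCard ℓ (![k₁, k₂, k₃]) =
      if Even (k₁ + k₂ + k₃) ∧ k₁ + k₂ + k₃ ≤ 2 * ℓ ∧
          2 * k₁ ≤ k₁ + k₂ + k₃ ∧ 2 * k₂ ≤ k₁ + k₂ + k₃ ∧ 2 * k₃ ≤ k₁ + k₂ + k₃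
      then 1 else 0 := by
  unfold DSCard
  split_ifs with hP
  · obtain ⟨⟨m, hm⟩, hle, ha, hb, hc⟩ := hP
    rw [Nat.card_eq_one_iff_unique]
    constructor
    · constructor
      rintro ⟨⟨x, y⟩, h⟩ ⟨⟨x', y'⟩, h'⟩
      obtain ⟨hx, hy⟩ := ds_unique ℓ k₁ k₂ k₃ x y x' y' h h'
      exact Subtype.ext (Prod.ext hx hy)
    · refine ⟨⟨(![k₁, m - k₁, 0], ![0, k₁ + k₂ - m, k₃]), ?_⟩⟩
      show IsDoubleSeq ℓ ![k₁, k₂, k₃] ![k₁, m - k₁, 0] ![0, k₁ + k₂ - m, k₃]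
      rw [ds_iff]
      simp only [Matrix.cons_val_zero, Matrix.cons_val_one, Matrix.head_cons,
        Matrix.cons_val_two, Matrix.tail_cons]
      refine ⟨?_, ?_, ?_, ?_, ?_, ?_, ?_, ?_, ?_, ?_, ?_, ?_, ?_⟩ <;> omega
  · rw [Nat.card_eq_zero]
    left
    constructor
    rintro ⟨⟨x, y⟩, h⟩
    exact hP (ds_nec ℓ k₁ k₂ k₃ x y h)
end

section
/- Let DS be a double sequence of level ℓ, height h(DS) > 1, and shape k = (k₁,…,kₙ) with k₁ ≥ ⋯ ≥ kₙ > 0. Then there exists a nonempty subset T ⊆ {1,…,n} of even cardinality and a double sequence DS' of level ℓ - 1 with height h(DS') = h(DS) - 1 and shape k' where k'ⱼ = kⱼ - 1 for j ∈ T and k'ⱼ = kⱼ for j ∉ T. -/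
/-- The height of a double sequence: the maximum over `1 ≤ i ≤ n-1` (here the
first `n-1` indices) of `xᵢ + ∑_{j<i}(xⱼ - yⱼ)`. -/
def DSHeight (n : ℕ) (hn : 2 ≤ n) (x y : Fin n → ℤ) : ℤ :=
  (Finset.univ.filter fun i : Fin n => (i : ℕ) < n - 1).sup'
    ⟨⟨0, by omega⟩, by simp [Finset.mem_filter]; omega⟩
    (fun i => x i + ∑ j ∈ Finset.Iio i, (x j - y j))


namespace Stmt18Aux

variable (X Y : ℕ → ℤ) (h : ℤ)

/-- partial sums -/
def S (i : ℕ) : ℤ := ∑ j ∈ Finset.range i, (X j - Y j)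

/-- state: true means currently "open" (shifted down by 1) -/
def D : ℕ → Bool
  | 0 => false
  | i+1 => if D i then decide (S X Y i ≠ Y i) else decide (X i + S X Y i = h)

def opn (i : ℕ) : Prop := D X Y h i = false ∧ X i + S X Y i = h
def cls (i : ℕ) : Prop := D X Y h i = true ∧ S X Y i = Y i

instance : DecidablePred (opn X Y h) := fun _ => instDecidableAnd
instance : DecidablePred (cls X Y h) := fun _ => instDecidableAnd

def X' (i : ℕ) : ℤ := X i - (if opn X Y h i then 1 else 0)
def Y' (i : ℕ) : ℤ := Y i - (if cls X Y h i then 1 else 0)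
def indD (i : ℕ) : ℤ := if D X Y h i then 1 else 0
def S' (i : ℕ) : ℤ := S X Y i - indD X Y h i

lemma S_succ (i : ℕ) : S X Y (i+1) = S X Y i + X i - Y i := by
  simp [S, Finset.sum_range_succ]; ring

lemma not_opn_cls (i : ℕ) : ¬ (opn X Y h i ∧ cls X Y h i) := by
  rintro ⟨⟨h1, _⟩, ⟨h2, _⟩⟩; rw [h1] at h2; exact Bool.false_ne_true h2

lemma D_succ (i : ℕ) : D X Y h (i+1) =
    if D X Y h i then decide (S X Y i ≠ Y i) else decide (X i + S X Y i = h) := rfl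

lemma indD_succ (i : ℕ) :
    indD X Y h (i+1) = indD X Y h i + (if opn X Y h i then 1 else 0)
      - (if cls X Y h i then 1 else 0) := by
  simp only [indD, opn, cls, D_succ]
  rcases Bool.eq_false_or_eq_true (D X Y h i) with hD | hD <;> by_cases hc : S X Y i = Y i <;>
    by_cases ho : X i + S X Y i = h <;> simp [hc, ho] <;> simp [hD]

lemma S'_succ (i : ℕ) : S' X Y h (i+1) = S' X Y h i + X' X Y h i - Y' X Y h i := by
  unfold S' X' Y'
  rw [S_succ, indD_succ]; ring

end Stmt18Aux

namespace Stmt18Aux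

variable (X Y : ℕ → ℤ) (h : ℤ) (n : ℕ)

lemma inv (hh : 2 ≤ h)
    (H : ∀ i < n, 0 ≤ X i ∧ 0 ≤ Y i ∧ Y i ≤ S X Y i ∧ X i + S X Y i ≤ h) :
    ∀ i, i ≤ n → 0 ≤ S' X Y h i ∧ S' X Y h i ≤ h - 1 := by
  intro i
  induction i with
  | zero => intro _; simp [S', S, indD, D]; omega
  | succ i ih =>
    intro hi
    have hin : i < n := hi
    obtain ⟨hX, hY, hYS, hP⟩ := H i hin
    have h1 := ih (Nat.le_of_lt hin)
    rw [S'_succ]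
    have e1 : X' X Y h i = X i - (if opn X Y h i then 1 else 0) := rfl
    have e2 : Y' X Y h i = Y i - (if cls X Y h i then 1 else 0) := rfl
    have e3 : S' X Y h i = S X Y i - (if D X Y h i = true then 1 else 0) := rfl
    by_cases hD : D X Y h i = true
    · have ho : ¬ opn X Y h i := fun hcon => by simp [hcon.1] at hD
      rw [if_neg ho] at e1; rw [if_pos hD] at e3
      by_cases hc : S X Y i = Y i
      · rw [if_pos ⟨hD, hc⟩] at e2; omega
      · rw [if_neg (fun hcon : cls X Y h i => hc hcon.2)] at e2; omega
    · have hD' : D X Y h i = false := by simpa using hD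
      have hcl : ¬ cls X Y h i := fun hcon => by simp [hcon.1] at hD'
      rw [if_neg hcl] at e2; rw [if_neg hD] at e3
      by_cases ho : X i + S X Y i = h
      · rw [if_pos ⟨hD', ho⟩] at e1; omega
      · rw [if_neg (fun hcon : opn X Y h i => ho hcon.2)] at e1; omega

lemma block (hh : 2 ≤ h)
    (H : ∀ i < n, 0 ≤ X i ∧ 0 ≤ Y i ∧ Y i ≤ S X Y i ∧ X i + S X Y i ≤ h)
    (i : ℕ) (hin : i < n) :
    0 ≤ X' X Y h i ∧ 0 ≤ Y' X Y h i ∧ Y' X Y h i ≤ S' X Y h i ∧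
      X' X Y h i + S' X Y h i ≤ h - 1 ∧
      (X i + S X Y i = h → X' X Y h i + S' X Y h i = h - 1) := by
  obtain ⟨hX, hY, hYS, hP⟩ := H i hin
  have h1 := inv X Y h n hh H i (Nat.le_of_lt hin)
  have e1 : X' X Y h i = X i - (if opn X Y h i then 1 else 0) := rfl
  have e2 : Y' X Y h i = Y i - (if cls X Y h i then 1 else 0) := rfl
  have e3 : S' X Y h i = S X Y i - (if D X Y h i = true then 1 else 0) := rfl
  by_cases hD : D X Y h i = true
  · have ho : ¬ opn X Y h i := fun hcon => by simp [hcon.1] at hD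
    rw [if_neg ho] at e1; rw [if_pos hD] at e3
    by_cases hc : S X Y i = Y i
    · rw [if_pos ⟨hD, hc⟩] at e2; omega
    · rw [if_neg (fun hcon : cls X Y h i => hc hcon.2)] at e2; omega
  · have hD' : D X Y h i = false := by simpa using hD
    have hcl : ¬ cls X Y h i := fun hcon => by simp [hcon.1] at hD'
    rw [if_neg hcl] at e2; rw [if_neg hD] at e3
    by_cases ho : X i + S X Y i = h
    · rw [if_pos ⟨hD', ho⟩] at e1; omega
    · rw [if_neg (fun hcon : opn X Y h i => ho hcon.2)] at e1; omega

lemma D_final (hn : 0 < n) (hS : S X Y n = 0) (hh : 2 ≤ h)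
    (H : ∀ i < n, 0 ≤ X i ∧ 0 ≤ Y i ∧ Y i ≤ S X Y i ∧ X i + S X Y i ≤ h) :
    D X Y h n = false := by
  obtain ⟨m, rfl⟩ : ∃ m, n = m + 1 := ⟨n - 1, by omega⟩
  obtain ⟨hX, hY, hYS, hP⟩ := H m (Nat.lt_succ_self m)
  have hsuc := S_succ X Y m
  have hXm : X m = 0 := by omega
  have hYm : Y m = S X Y m := by omega
  rw [D_succ]
  by_cases hD : D X Y h m = true
  · rw [if_pos hD]; simp [hYm]
  · have hD' : D X Y h m = false := by simpa using hD
    have h1 := inv X Y (h := h) (n := m+1) hh H m (by omega)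
    have e3 : S' X Y h m = S X Y m - (if D X Y h m = true then 1 else 0) := rfl
    rw [if_neg hD] at e3
    rw [if_neg hD]
    have : ¬ (X m + S X Y m = h) := by omega
    simp [this]

lemma indD_eq (i : ℕ) : indD X Y h i =
    ∑ j ∈ Finset.range i, ((if opn X Y h j then (1:ℤ) else 0) - (if cls X Y h j then 1 else 0)) := by
  induction i with
  | zero => simp [indD, D]
  | succ i ih => rw [Finset.sum_range_succ, ← ih, indD_succ]; ring

lemma S'_eq_sum (i : ℕ) : S' X Y h i = ∑ j ∈ Finset.range i, (X' X Y h j - Y' X Y h j) := by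
  induction i with
  | zero => simp [S', S, indD, D]
  | succ i ih => rw [Finset.sum_range_succ, ← ih, S'_succ]; ring

lemma exists_opn_of_D (i : ℕ) (hD : D X Y h i = true) : ∃ j < i, opn X Y h j := by
  induction i with
  | zero => simp [D] at hD
  | succ i ih =>
    rw [D_succ] at hD
    by_cases h2 : D X Y h i = true
    · obtain ⟨j, hj, hoj⟩ := ih h2
      exact ⟨j, Nat.lt_succ_of_lt hj, hoj⟩
    · rw [if_neg h2] at hD
      exact ⟨i, Nat.lt_succ_self i, ⟨by simpa using h2, by simpa using hD⟩⟩

end Stmt18Aux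

open Stmt18Aux

/-- if `DS` is a double sequence of level `ℓ`, height `> 1` and shape
`k₁ ≥ ⋯ ≥ kₙ > 0`, then there is a nonempty even subset `T` and a double sequence
of level `ℓ - 1`, height one less, and shape `k'` with `k'ⱼ = kⱼ - 1` for `j ∈ T`
and `k'ⱼ = kⱼ` otherwise. -/
theorem stmt18 (n : ℕ) (hn : 2 ≤ n) (ℓ : ℤ) (k x y : Fin n → ℤ)
    (h : IsDoubleSeq ℓ k x y)
    (hh : 1 < DSHeight n hn x y)
    (hsort : ∀ i j : Fin n, i ≤ j → k j ≤ k i)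
    (hpos : ∀ j, 0 < k j) :
    ∃ T : Finset (Fin n), T.Nonempty ∧ Even T.card ∧
      ∃ x' y' : Fin n → ℤ,
        IsDoubleSeq (ℓ - 1) (fun j => if j ∈ T then k j - 1 else k j) x' y' ∧
        DSHeight n hn x' y' = DSHeight n hn x y - 1 := by
  classical
  obtain ⟨hbd, hk, hpk, hvl, hbal⟩ := h
  set hgt := DSHeight n hn x y with hgt_def
  have hh2 : 2 ≤ hgt := hh
  -- extended sequences
  set X : ℕ → ℤ := fun i => if hi : i < n then x ⟨i, hi⟩ else 0 with hX_def
  set Y : ℕ → ℤ := fun i => if hi : i < n then y ⟨i, hi⟩ else 0 with hY_def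
  have hXv : ∀ i : Fin n, X i.val = x i := fun i => by simp [hX_def, i.isLt]
  have hYv : ∀ i : Fin n, Y i.val = y i := fun i => by simp [hY_def, i.isLt]
  -- bridging between Fin sums and ℕ sums
  have bridge : ∀ (g : Fin n → ℤ) (G : ℕ → ℤ), (∀ j : Fin n, G j.val = g j) →
      ∀ i : Fin n, ∑ j ∈ Finset.Iio i, g j = ∑ j ∈ Finset.range i.val, G j := by
    intro g G hg i
    rw [← Nat.Iio_eq_range, ← Fin.map_valEmbedding_Iio, Finset.sum_map]
    exact Finset.sum_congr rfl fun j _ => (hg j).symm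
  have HS : ∀ i : Fin n, S X Y i.val = ∑ j ∈ Finset.Iio i, (x j - y j) := by
    intro i
    rw [bridge (fun j => x j - y j) (fun j => X j - Y j)
      (fun j => by show X j.val - Y j.val = x j - y j; rw [hXv, hYv]) i]
    rfl
  -- S n = 0
  have hSn : S X Y n = 0 := by
    have : S X Y n = ∑ j : Fin n, (X j.val - Y j.val) :=
      (Fin.sum_univ_eq_sum_range (fun j => X j - Y j) n).symm
    rw [this]
    simp only [hXv, hYv]
    rw [Finset.sum_sub_distrib, hbal]
    ring
  -- height facts
  have Fne : (Finset.univ.filter fun i : Fin n => (i : ℕ) < n - 1).Nonempty :=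
    ⟨⟨0, by omega⟩, by simp [Finset.mem_filter]; omega⟩
  have hle : ∀ i : Fin n, (i : ℕ) < n - 1 → x i + ∑ j ∈ Finset.Iio i, (x j - y j) ≤ hgt := by
    intro i hi
    exact Finset.le_sup' (fun i : Fin n => x i + ∑ j ∈ Finset.Iio i, (x j - y j))
      (Finset.mem_filter.mpr ⟨Finset.mem_univ i, hi⟩)
  obtain ⟨i₀, hi₀F, hi₀⟩ := Finset.exists_mem_eq_sup'
    (s := Finset.univ.filter fun i : Fin n => (i : ℕ) < n - 1) Fne
    (fun i => x i + ∑ j ∈ Finset.Iio i, (x j - y j))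
  have hi₀lt : (i₀ : ℕ) < n - 1 := (Finset.mem_filter.mp hi₀F).2
  have hi₀eq : x i₀ + ∑ j ∈ Finset.Iio i₀, (x j - y j) = hgt := hi₀.symm
  -- the master hypothesis H
  have HP : ∀ i : Fin n, (i : ℕ) < n - 1 → X i.val + S X Y i.val ≤ hgt := by
    intro i hi
    rw [hXv, HS]; exact hle i hi
  have H : ∀ i < n, 0 ≤ X i ∧ 0 ≤ Y i ∧ Y i ≤ S X Y i ∧ X i + S X Y i ≤ hgt := by
    intro i hi
    have h1 : 0 ≤ X i := by rw [show i = (⟨i, hi⟩ : Fin n).val from rfl, hXv]; exact (hbd _).1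
    have h2 : 0 ≤ Y i := by rw [show i = (⟨i, hi⟩ : Fin n).val from rfl, hYv]; exact (hbd _).2.2.1
    have h3 : Y i ≤ S X Y i := by
      rw [show i = (⟨i, hi⟩ : Fin n).val from rfl, hYv, HS]
      have := hvl ⟨i, hi⟩
      omega
    refine ⟨h1, h2, h3, ?_⟩
    by_cases hc : i < n - 1
    · exact HP ⟨i, hi⟩ hc
    · -- i = n - 1
      have hieq : i = n - 1 := by omega
      -- S (i+1) = 0
      have hsucc : i + 1 = n := by omega
      have hS1 : S X Y (i+1) = 0 := by rw [hsucc]; exact hSn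
      have hrec := S_succ X Y i
      -- X i + S i = Y i ≤ S i
      have hXS : X i + S X Y i = Y i := by omega
      -- S i ≤ hgt : S i = S (i-1) + X (i-1) - Y (i-1) ≤ X(i-1) + S(i-1) ≤ hgt
      have him : i - 1 < n := by omega
      have h3' : Y (i-1) ≤ S X Y (i-1) := by
        rw [show i - 1 = (⟨i-1, him⟩ : Fin n).val from rfl, hYv, HS]
        have := hvl ⟨i-1, him⟩
        omega
      have hy1 : 0 ≤ Y (i-1) := by
        rw [show i - 1 = (⟨i-1, him⟩ : Fin n).val from rfl, hYv]; exact (hbd _).2.2.1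
      have hPm : X (i-1) + S X Y (i-1) ≤ hgt := HP ⟨i-1, him⟩ (by simp; omega)
      have hrec' := S_succ X Y (i-1)
      have : i - 1 + 1 = i := by omega
      rw [this] at hrec'
      omega
  -- instantiate
  have hblock := fun (i : Fin n) => block X Y hgt n hh2 H i.val i.isLt
  have hinv := fun (i : Fin n) => inv X Y hgt n hh2 H i.val (Nat.le_of_lt i.isLt)
  have hDn : D X Y hgt n = false := D_final X Y hgt n (by omega) hSn hh2 H
  -- hgt ≤ ℓ
  have hgtle : hgt ≤ ℓ := by rw [← hi₀eq]; exact hpk i₀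
  -- new sequences
  set x' : Fin n → ℤ := fun i => X' X Y hgt i.val with hx'_def
  set y' : Fin n → ℤ := fun i => Y' X Y hgt i.val with hy'_def
  set T : Finset (Fin n) :=
    Finset.univ.filter (fun i : Fin n => opn X Y hgt i.val ∨ cls X Y hgt i.val) with hT_def
  have HS' : ∀ i : Fin n, (∑ j ∈ Finset.Iio i, (x' j - y' j)) = S' X Y hgt i.val := by
    intro i
    rw [bridge (fun j => x' j - y' j) (fun j => X' X Y hgt j - Y' X Y hgt j)
      (fun j => rfl) i, S'_eq_sum]
  refine ⟨T, ?_, ?_, x', y', ⟨?_, ?_, ?_, ?_, ?_⟩, ?_⟩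
  · -- nonempty
    by_cases hD : D X Y hgt i₀.val = true
    · obtain ⟨j, hj, hoj⟩ := exists_opn_of_D X Y hgt i₀.val hD
      have hjn : j < n := lt_trans hj i₀.isLt
      exact ⟨⟨j, hjn⟩, Finset.mem_filter.mpr ⟨Finset.mem_univ _, Or.inl hoj⟩⟩
    · refine ⟨i₀, Finset.mem_filter.mpr ⟨Finset.mem_univ _, Or.inl ⟨by simpa using hD, ?_⟩⟩⟩
      rw [hXv, HS]; exact hi₀eq
  · -- even cardinality
    have hcard : (T.card : ℤ) = ∑ j : Fin n,
        ((if opn X Y hgt j.val then (1:ℤ) else 0) + (if cls X Y hgt j.val then 1 else 0)) := by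
      rw [hT_def, Finset.card_filter]
      push_cast
      refine Finset.sum_congr rfl fun j _ => ?_
      by_cases ho : opn X Y hgt j.val
      · have hc : ¬ cls X Y hgt j.val := fun hc => not_opn_cls X Y hgt j.val ⟨ho, hc⟩
        simp [ho, hc]
      · by_cases hc : cls X Y hgt j.val <;> simp [ho, hc]
    have hzero : ∑ j : Fin n,
        ((if opn X Y hgt j.val then (1:ℤ) else 0) - (if cls X Y hgt j.val then 1 else 0)) = 0 := by
      rw [Fin.sum_univ_eq_sum_range
        (fun j => (if opn X Y hgt j then (1:ℤ) else 0) - (if cls X Y hgt j then 1 else 0)) n,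
        ← indD_eq]
      simp [indD, hDn]
    rw [← Int.even_coe_nat, hcard]
    rw [Finset.sum_sub_distrib] at hzero
    rw [Finset.sum_add_distrib]
    exact ⟨∑ j : Fin n, (if opn X Y hgt j.val then (1:ℤ) else 0), by omega⟩
  · -- bounds
    intro j
    obtain ⟨b1, b2, b3, b4, _⟩ := hblock j
    have hinvj := hinv j
    have ex : x' j = X' X Y hgt j.val := rfl
    have ey : y' j = Y' X Y hgt j.val := rfl
    constructor
    · exact b1
    refine ⟨?_, b2, ?_⟩
    · omega
    · omega
  · -- shape
    intro j
    show x' j + y' j = if j ∈ T then k j - 1 else k j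
    have hxy : x j + y j = k j := hk j
    have e1 : x' j = X j.val - (if opn X Y hgt j.val then 1 else 0) := by
      rw [hx'_def]; rfl
    have e2 : y' j = Y j.val - (if cls X Y hgt j.val then 1 else 0) := by
      rw [hy'_def]; rfl
    rw [hXv] at e1; rw [hYv] at e2
    have hmem : j ∈ T ↔ (opn X Y hgt j.val ∨ cls X Y hgt j.val) := by
      rw [hT_def]; simp
    by_cases ho : opn X Y hgt j.val
    · have hc : ¬ cls X Y hgt j.val := fun hc => not_opn_cls X Y hgt j.val ⟨ho, hc⟩
      rw [if_pos (hmem.mpr (Or.inl ho))]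
      rw [e1, e2, if_pos ho, if_neg hc]; omega
    · by_cases hc : cls X Y hgt j.val
      · rw [if_pos (hmem.mpr (Or.inr hc))]
        rw [e1, e2, if_neg ho, if_pos hc]; omega
      · rw [if_neg (fun hm => by rcases hmem.mp hm with h' | h' <;> [exact ho h'; exact hc h'])]
        rw [e1, e2, if_neg ho, if_neg hc]; omega
  · -- peaks ≤ ℓ - 1
    intro i
    obtain ⟨_, _, _, b4, _⟩ := hblock i
    rw [HS']
    have : x' i = X' X Y hgt i.val := rfl
    omega
  · -- valleys ≥ 0
    intro i
    obtain ⟨_, _, b3, _, _⟩ := hblock i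
    rw [HS']
    have : y' i = Y' X Y hgt i.val := rfl
    omega
  · -- balance
    have h1 : ∑ j : Fin n, (x' j - y' j) = S' X Y hgt n := by
      rw [S'_eq_sum]
      exact Fin.sum_univ_eq_sum_range (fun j => X' X Y hgt j - Y' X Y hgt j) n
    have h2 : S' X Y hgt n = 0 := by simp [S', indD, hDn, hSn]
    have := h1.trans h2
    rw [Finset.sum_sub_distrib] at this
    omega
  · -- height
    apply le_antisymm
    · apply Finset.sup'_le
      intro i hi
      obtain ⟨_, _, _, b4, _⟩ := hblock i
      rw [HS']
      have : x' i = X' X Y hgt i.val := rfl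
      omega
    · have hP' : x' i₀ + ∑ j ∈ Finset.Iio i₀, (x' j - y' j) = hgt - 1 := by
        obtain ⟨_, _, _, _, b5⟩ := hblock i₀
        rw [HS']
        exact b5 (by rw [hXv, HS]; exact hi₀eq)
      calc hgt - 1 = x' i₀ + ∑ j ∈ Finset.Iio i₀, (x' j - y' j) := hP'.symm
        _ ≤ _ := Finset.le_sup'
          (fun i : Fin n => x' i + ∑ j ∈ Finset.Iio i, (x' j - y' j)) hi₀F
end

section
/- Fix i with 1 ≤ i ≤ ⌊n/2⌋ and I = {1,…,2i} ⊆ {1,…,n} with n ≥ 5. Consider the vector v_I = ∑_{j∈I} e_j - (i-1)f in ℚ^{n+1} = span(e₁,…,eₙ,f), and the set S of all vectors ∑_{j∈J} e_j - (|J|/2 - 1)f over even subsets J ⊆ {1,…,n} (with J = ∅ giving f). Then there exist n linearly independent linear functionals ℓ₁,…,ℓₙ on ℚ^{n+1} that vanish on v_I and are nonnegative on every element of S. Consequently v_I spans an extremal ray of the cone generated by S. -/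
/-- The vector `∑_{j∈J} e_j - (|J|/2 - 1) f` in `ℚⁿ × ℚ·f`, associated to an even
subset `J` (a level-one conformal block divisor class; `J = ∅` gives `f = E`). -/
noncomputable def cbVec (n : ℕ) (J : Finset (Fin n)) : (Fin n → ℚ) × ℚ :=
  ((∑ j ∈ J, Pi.single j (1 : ℚ)), -(((J.card : ℚ) / 2) - 1))

/-- Membership in the cone generated by the vectors `cbVec n J` over even `J`. -/
def InCBCone (n : ℕ) (w : (Fin n → ℚ) × ℚ) : Prop :=
  ∃ c : Finset (Fin n) → ℚ, (∀ J, 0 ≤ c J) ∧ (∀ J, ¬ Even J.card → c J = 0) ∧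
    w = ∑ J ∈ (Finset.univ : Finset (Finset (Fin n))), c J • cbVec n J

/-- The functionals: for `k < 2i`, `ℓ_k(a,b) = (∑ j, a j) - 2 a k + 2 b`;
for `k ≥ 2i`, `ℓ_k(a,b) = a k`. -/
noncomputable def Lfun (n i : ℕ) (k : Fin n) : ((Fin n → ℚ) × ℚ) →ₗ[ℚ] ℚ :=
  if (k : ℕ) < 2 * i then
    (∑ j : Fin n, (LinearMap.proj j).comp (LinearMap.fst ℚ (Fin n → ℚ) ℚ))
      - (2 : ℚ) • (LinearMap.proj k).comp (LinearMap.fst ℚ (Fin n → ℚ) ℚ)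
      + (2 : ℚ) • LinearMap.snd ℚ (Fin n → ℚ) ℚ
  else (LinearMap.proj k).comp (LinearMap.fst ℚ (Fin n → ℚ) ℚ)

lemma Lfun_apply (n i : ℕ) (k : Fin n) (a : Fin n → ℚ) (b : ℚ) :
    Lfun n i k (a, b) =
      if (k : ℕ) < 2 * i then (∑ j, a j) - 2 * a k + 2 * b else a k := by
  unfold Lfun
  split <;> simp

lemma cbVec_fst_apply (n : ℕ) (J : Finset (Fin n)) (k : Fin n) :
    (cbVec n J).1 k = if k ∈ J then 1 else 0 := by
  simp [cbVec, Finset.sum_apply, Pi.single_apply, Finset.sum_ite_eq' J k (fun _ => (1:ℚ))]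

lemma cbVec_fst_sum (n : ℕ) (J : Finset (Fin n)) :
    ∑ j, (cbVec n J).1 j = (J.card : ℚ) := by
  simp only [cbVec_fst_apply]
  rw [Finset.sum_ite_mem, Finset.univ_inter, Finset.sum_const, nsmul_eq_mul, mul_one]

/-- Key evaluation: `ℓ_k(cbVec J) = 2 - 2·[k∈J]` for `k < 2i`, and `[k∈J]` otherwise. -/
lemma Lfun_cb (n i : ℕ) (k : Fin n) (J : Finset (Fin n)) :
    Lfun n i k (cbVec n J) =
      if (k : ℕ) < 2 * i then (if k ∈ J then 0 else 2) else (if k ∈ J then 1 else 0) := by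
  have h : cbVec n J = ((cbVec n J).1, -(((J.card : ℚ) / 2) - 1)) := rfl
  rw [h, Lfun_apply, cbVec_fst_sum, cbVec_fst_apply]
  split <;> split <;> ring

lemma Lfun_cb_nonneg (n i : ℕ) (k : Fin n) (J : Finset (Fin n)) :
    0 ≤ Lfun n i k (cbVec n J) := by
  rw [Lfun_cb]; split <;> split <;> norm_num

lemma Lfun_li (n i : ℕ) : LinearIndependent ℚ (Lfun n i) := by
  rw [Fintype.linearIndependent_iff]
  intro g hg
  -- evaluate at (0, 1) to get the sum of the g k for k < 2i
  have hS0 : ∑ k : Fin n, (if (k : ℕ) < 2 * i then g k else 0) = 0 := by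
    have h1 := congrArg (fun φ : ((Fin n → ℚ) × ℚ) →ₗ[ℚ] ℚ => φ ((0 : Fin n → ℚ), (1:ℚ))) hg
    simp only [LinearMap.coe_sum, Finset.sum_apply, LinearMap.smul_apply, Lfun_apply,
      Pi.zero_apply, Finset.sum_const_zero, LinearMap.zero_apply, smul_eq_mul,
      mul_zero, mul_one, sub_zero, zero_add] at h1
    have h2 : ∑ x : Fin n, g x * (if (x : ℕ) < 2 * i then (2:ℚ) else 0)
        = 2 * ∑ k : Fin n, (if (k : ℕ) < 2 * i then g k else 0) := by
      rw [Finset.mul_sum]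
      refine Finset.sum_congr rfl fun k _ => ?_
      by_cases h : (k : ℕ) < 2 * i <;> simp [h, mul_comm]
    rw [h2] at h1
    linarith
  intro m
  have h2 := congrArg (fun φ : ((Fin n → ℚ) × ℚ) →ₗ[ℚ] ℚ =>
      φ (Pi.single m (1:ℚ), (0:ℚ))) hg
  simp only [LinearMap.coe_sum, Finset.sum_apply, LinearMap.smul_apply, Lfun_apply,
    smul_eq_mul, LinearMap.zero_apply] at h2
  have hsingle : ∀ k : Fin n, (Pi.single m (1:ℚ) : Fin n → ℚ) k = if k = m then 1 else 0 := by
    intro k; rw [Pi.single_apply]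
  have hsum1 : ∑ j : Fin n, (Pi.single m (1:ℚ) : Fin n → ℚ) j = 1 := by
    simp only [hsingle]
    rw [Finset.sum_ite_eq' Finset.univ m (fun _ => (1:ℚ))]
    simp
  have h3 : ∑ k : Fin n, ((if (k : ℕ) < 2 * i then g k else 0)
      + (if k = m then g m * (if (m : ℕ) < 2 * i then (-2 : ℚ) else 1) else 0)) = 0 := by
    refine Eq.trans (Finset.sum_congr rfl fun k _ => ?_) h2
    rw [hsum1, hsingle]
    by_cases hk : k = m
    · subst hk
      by_cases h : (k : ℕ) < 2 * i <;> simp [h] <;> ring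
    · simp only [if_neg hk]
      by_cases h : (k : ℕ) < 2 * i <;> simp [h]
  rw [Finset.sum_add_distrib, hS0, zero_add,
    Finset.sum_ite_eq' Finset.univ m] at h3
  simp only [Finset.mem_univ, if_true] at h3
  rcases mul_eq_zero.mp h3 with h | h
  · exact h
  · exfalso; revert h; split <;> norm_num

/-- If all functionals vanish on `cbVec J`, then `J = I`. Contrapositive form:
if `J ≠ I` then some functional is positive on `cbVec J`. -/
lemma Lfun_pos_of_ne (n i : ℕ) (I : Finset (Fin n))
    (hI : I = Finset.univ.filter fun j : Fin n => (j : ℕ) < 2 * i)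
    (J : Finset (Fin n)) (hJ : J ≠ I) :
    ∃ k, 0 < Lfun n i k (cbVec n J) := by
  have hmem : ∀ k : Fin n, k ∈ I ↔ (k : ℕ) < 2 * i := by
    subst hI; intro k; simp
  rcases Finset.symmDiff_nonempty.mpr hJ with ⟨k, hk⟩
  rw [Finset.mem_symmDiff] at hk
  refine ⟨k, ?_⟩
  rw [Lfun_cb]
  rcases hk with ⟨hkJ, hkI⟩ | ⟨hkI, hkJ⟩
  · -- k ∈ J, k ∉ I : k ≥ 2i, value 1
    rw [if_neg (fun h => hkI ((hmem k).mpr h)), if_pos hkJ]; norm_num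
  · -- k ∈ I, k ∉ J : k < 2i, value 2
    rw [if_pos ((hmem k).mp hkI), if_neg hkJ]; norm_num

/-- for `n ≥ 5`, `1 ≤ i ≤ ⌊n/2⌋` and `I = {1,…,2i}`, there are `n`
linearly independent linear functionals vanishing on `v_I = ∑_{j∈I} e_j - (i-1)f`
and nonnegative on all generators `cbVec n J` (`J` even); consequently `v_I` spans
an extremal ray of the cone generated by these vectors. -/
theorem stmt19 (n : ℕ) (hn : 5 ≤ n) (i : ℕ) (hi1 : 1 ≤ i) (hi2 : 2 * i ≤ n)
    (I : Finset (Fin n)) (hI : I = Finset.univ.filter fun j : Fin n => (j : ℕ) < 2 * i) :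
    (∃ L : Fin n → (((Fin n → ℚ) × ℚ) →ₗ[ℚ] ℚ),
      LinearIndependent ℚ L ∧
      (∀ k, L k (cbVec n I) = 0) ∧
      (∀ k (J : Finset (Fin n)), Even J.card → 0 ≤ L k (cbVec n J))) ∧
    (∀ u w : (Fin n → ℚ) × ℚ, InCBCone n u → InCBCone n w →
      ∀ c : ℚ, 0 ≤ c → u + w = c • cbVec n I →
        ∃ c₁ c₂ : ℚ, 0 ≤ c₁ ∧ 0 ≤ c₂ ∧ u = c₁ • cbVec n I ∧ w = c₂ • cbVec n I) := by
  have hmem : ∀ k : Fin n, k ∈ I ↔ (k : ℕ) < 2 * i := by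
    subst hI; intro k; simp
  have hLI : ∀ k, Lfun n i k (cbVec n I) = 0 := by
    intro k
    rw [Lfun_cb]
    by_cases h : (k : ℕ) < 2 * i
    · rw [if_pos h, if_pos ((hmem k).mpr h)]
    · rw [if_neg h, if_neg (fun hk => h ((hmem k).mp hk))]
  constructor
  · exact ⟨Lfun n i, Lfun_li n i, hLI, fun k J _ => Lfun_cb_nonneg n i k J⟩
  · rintro u w ⟨cu, hcu0, -, hcu⟩ ⟨cw, hcw0, -, hcw⟩ c hc hsum
    -- each functional vanishes on u and w
    have eval : ∀ (cz : Finset (Fin n) → ℚ) (k : Fin n),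
        Lfun n i k (∑ J : Finset (Fin n), cz J • cbVec n J)
          = ∑ J : Finset (Fin n), cz J * Lfun n i k (cbVec n J) := by
      intro cz k
      rw [map_sum]
      exact Finset.sum_congr rfl fun J _ => by rw [map_smul, smul_eq_mul]
    have hunn : ∀ k, 0 ≤ Lfun n i k u := by
      intro k; rw [hcu, eval]
      exact Finset.sum_nonneg fun J _ => mul_nonneg (hcu0 J) (Lfun_cb_nonneg n i k J)
    have hwnn : ∀ k, 0 ≤ Lfun n i k w := by
      intro k; rw [hcw, eval]
      exact Finset.sum_nonneg fun J _ => mul_nonneg (hcw0 J) (Lfun_cb_nonneg n i k J)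
    have hadd : ∀ k, Lfun n i k u + Lfun n i k w = 0 := by
      intro k
      rw [← map_add, hsum, map_smul, hLI, smul_zero]
    have hu0 : ∀ k, Lfun n i k u = 0 := fun k => by
      have := hadd k; have := hunn k; have := hwnn k; linarith
    have hw0 : ∀ k, Lfun n i k w = 0 := fun k => by
      have := hadd k; have := hunn k; have := hwnn k; linarith
    -- coefficients vanish away from I
    have key : ∀ (cz : Finset (Fin n) → ℚ), (∀ J, 0 ≤ cz J) →
        (∀ k, Lfun n i k (∑ J : Finset (Fin n), cz J • cbVec n J) = 0) →
        ∀ J, J ≠ I → cz J = 0 := by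
      intro cz hcz0 hz J hJ
      rcases Lfun_pos_of_ne n i I hI J hJ with ⟨k, hk⟩
      have h0 := hz k
      rw [eval] at h0
      have hterm := (Finset.sum_eq_zero_iff_of_nonneg
        (fun J' _ => mul_nonneg (hcz0 J') (Lfun_cb_nonneg n i k J'))).mp h0 J
        (Finset.mem_univ J)
      rcases mul_eq_zero.mp hterm with h | h
      · exact h
      · exact absurd h (ne_of_gt hk)
    have collapse : ∀ (cz : Finset (Fin n) → ℚ), (∀ J, J ≠ I → cz J = 0) →
        ∑ J : Finset (Fin n), cz J • cbVec n J = cz I • cbVec n I := by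
      intro cz h
      exact Finset.sum_eq_single_of_mem I (Finset.mem_univ I)
        (fun J _ hJ => by rw [h J hJ, zero_smul])
    have hukey := key cu hcu0 (fun k => by rw [← hcu]; exact hu0 k)
    have hwkey := key cw hcw0 (fun k => by rw [← hcw]; exact hw0 k)
    exact ⟨cu I, cw I, hcu0 I, hcw0 I,
      by rw [hcu]; exact collapse cu hukey,
      by rw [hcw]; exact collapse cw hwkey⟩
end
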